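/- In every feasible schedule of the constructed job system, each blocker job k starts exactly at time 2kM (so it occupies [2kM, (2k+1)M)), and for every partition job i there exists some k with 0 ≤ k ≤ n−1 such that the execution interval [s_i, s_i + x_i) of job i is contained in the free window [(2k+1)M, (2k+2)M). -/
import Mathlib


/-- Release times of the constructed job system: blocker `k` is released at
`2kM`, every partition job at `0`. -/
noncomputable def rel (n M : ℕ) : Fin n ⊕ Fin (3 * n) → ℝ :=
  Sum.elim (fun k => ((2 * (k : ℕ) * M : ℕ) : ℝ)) (fun _ => 0)

/-- Deadlines of the constructed job system: blocker `k` has deadline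
`(2k+1)M`, every partition job has deadline `2nM`. -/
noncomputable def dl (n M : ℕ) : Fin n ⊕ Fin (3 * n) → ℝ :=
  Sum.elim (fun k => (((2 * (k : ℕ) + 1) * M : ℕ) : ℝ)) (fun _ => ((2 * n * M : ℕ) : ℝ))

/-- Lengths of the constructed job system: every blocker has length `M`,
partition job `i` has length `x i`. -/
noncomputable def len (n M : ℕ) (x : Fin (3 * n) → ℕ) : Fin n ⊕ Fin (3 * n) → ℝ :=
  Sum.elim (fun _ => (M : ℝ)) (fun i => (x i : ℝ))

/-- A schedule (assignment of start times) of the constructed job system is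
feasible if every job starts at or after its release time, finishes by its
deadline, and the execution intervals of distinct jobs are pairwise
disjoint. -/
def Feasible (n M : ℕ) (x : Fin (3 * n) → ℕ)
    (sched : Fin n ⊕ Fin (3 * n) → ℝ) : Prop :=
  (∀ j, rel n M j ≤ sched j) ∧
  (∀ j, sched j + len n M x j ≤ dl n M j) ∧
  (∀ j k, j ≠ k →
    Disjoint (Set.Ico (sched j) (sched j + len n M x j))
             (Set.Ico (sched k) (sched k + len n M x k)))

/-- **Structure of feasible schedules of the constructed job system.**
In every feasible schedule, each blocker job `k` starts exactly at time `2kM`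
(so it occupies `[2kM, (2k+1)M)`), and for every partition job `i` there is
some `k` (with `0 ≤ k ≤ n-1`) such that the execution interval
`[sched i, sched i + x i)` of job `i` is contained in the free window
`[(2k+1)M, (2k+2)M)`. -/
theorem feasible_schedule_structure
    (n M : ℕ) (hn : 0 < n) (hM : 0 < M)
    (x : Fin (3 * n) → ℕ) (hx : ∀ i, 0 < x i)
    (hlow : ∀ i, M < 4 * x i) (hhigh : ∀ i, 2 * x i < M)
    (hsum : ∑ i, x i = n * M)
    (sched : Fin n ⊕ Fin (3 * n) → ℝ)
    (hfeas : Feasible n M x sched) :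
    (∀ k : Fin n, sched (Sum.inl k) = ((2 * (k : ℕ) * M : ℕ) : ℝ)) ∧
    (∀ i : Fin (3 * n), ∃ k : Fin n,
      Set.Ico (sched (Sum.inr i)) (sched (Sum.inr i) + (x i : ℝ)) ⊆
        Set.Ico ((((2 * (k : ℕ) + 1) * M : ℕ) : ℝ)) ((((2 * (k : ℕ) + 2) * M : ℕ) : ℝ))) := by
  obtain ⟨hrel, hdl, hdisj⟩ := hfeas
  have hblock : ∀ k : Fin n, sched (Sum.inl k) = ((2 * (k : ℕ) * M : ℕ) : ℝ) := by
    intro k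
    have h1 := hrel (Sum.inl k)
    have h2 := hdl (Sum.inl k)
    simp only [rel, dl, len, Sum.elim_inl] at h1 h2
    push_cast at h1 h2 ⊢
    linarith
  refine ⟨hblock, ?_⟩
  intro i
  set s := sched (Sum.inr i) with hs
  have h1 := hrel (Sum.inr i)
  have h2 := hdl (Sum.inr i)
  simp only [rel, dl, len, Sum.elim_inr] at h1 h2
  have hxpos : (0:ℝ) < x i := by exact_mod_cast hx i
  have hMpos : (0:ℝ) < M := by exact_mod_cast hM
  have hdisjK : ∀ K : Fin n, Disjoint (Set.Ico s (s + (x i : ℝ)))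
      (Set.Ico ((2 * (K:ℕ) * M : ℕ) : ℝ) (((2 * (K:ℕ) * M : ℕ) : ℝ) + (M:ℝ))) := by
    intro K
    have h := hdisj (Sum.inr i) (Sum.inl K) (by simp)
    simp only [len, Sum.elim_inl, Sum.elim_inr, hblock K] at h
    exact h
  have h2' : s + (x i : ℝ) ≤ 2 * n * M := by push_cast at h2; linarith
  have hslt : s < 2 * n * M := by linarith
  set K : ℕ := ⌊s / (2 * M)⌋₊ with hKdef
  have h2M : (0:ℝ) < 2 * M := by linarith
  have hKle : (K : ℝ) * (2 * M) ≤ s := by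
    have hf := Nat.floor_le (by positivity : (0:ℝ) ≤ s / (2*M))
    calc (K:ℝ) * (2*M) ≤ (s / (2*M)) * (2*M) :=
          mul_le_mul_of_nonneg_right hf (le_of_lt h2M)
      _ = s := by field_simp
  have hKlt : s < ((K:ℝ) + 1) * (2 * M) := by
    have hf := Nat.lt_floor_add_one (s / (2*M))
    have hf' := (div_lt_iff₀ h2M).mp hf
    linarith
  have hKn : K < n := by
    by_contra h
    push_neg at h
    have : (n:ℝ) ≤ K := by exact_mod_cast h
    nlinarith
  have hlo : ((2 * (K:ℝ) + 1) * M) ≤ s := by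
    by_contra h
    push_neg at h
    have hmem1 : s ∈ Set.Ico s (s + (x i:ℝ)) := ⟨le_refl _, by linarith⟩
    have hmem2 : s ∈ Set.Ico ((2*K*M : ℕ):ℝ) (((2*K*M:ℕ):ℝ) + (M:ℝ)) := by
      constructor <;> push_cast <;> nlinarith
    exact Set.disjoint_left.mp (hdisjK ⟨K, hKn⟩) hmem1 hmem2
  have hhi : s + (x i:ℝ) ≤ (2*(K:ℝ) + 2) * M := by
    rcases lt_or_eq_of_le (Nat.succ_le_of_lt hKn) with h | h
    · by_contra hc
      push_neg at hc
      have hm1 : ((2*(K+1)*M : ℕ):ℝ) ∈ Set.Ico s (s + (x i:ℝ)) := by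
        constructor <;> push_cast <;> nlinarith
      have hm2 : ((2*(K+1)*M : ℕ):ℝ) ∈
          Set.Ico ((2*(K+1)*M:ℕ):ℝ) (((2*(K+1)*M:ℕ):ℝ) + (M:ℝ)) :=
        ⟨le_refl _, by linarith⟩
      exact Set.disjoint_left.mp (hdisjK ⟨K+1, h⟩) hm1 hm2
    · have hn' : (n:ℝ) = (K:ℝ) + 1 := by exact_mod_cast h.symm
      nlinarith
  refine ⟨⟨K, hKn⟩, Set.Ico_subset_Ico ?_ ?_⟩ <;> push_cast <;> nlinarith
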